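/- For any probability distribution ρ on a finite-dimensional real inner product space with H = E[x ⊗ x], the map Σ_ρ(C) = E[⟨x, C x⟩ x ⊗ x] − H C H sends positive semi-definite C to positive semi-definite matrices. -/

import Mathlib

open MeasureTheory

lemma sq_integral_le_integral_sq {α : Type*} [MeasurableSpace α] {ρ : Measure α}
    [IsProbabilityMeasure ρ] {g : α → ℝ} (hm : AEStronglyMeasurable g ρ)
    (hg2 : Integrable (fun x => g x ^ 2) ρ) :
    (∫ x, g x ∂ρ) ^ 2 ≤ ∫ x, g x ^ 2 ∂ρ := by
  have hL : MemLp g 2 ρ := (memLp_two_iff_integrable_sq hm).2 hg2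
  have h := ProbabilityTheory.variance_nonneg g ρ
  rw [ProbabilityTheory.variance_eq_sub hL] at h
  simpa [Pi.pow_apply] using le_of_sub_nonneg h

lemma dot_mul_dot_expand {n : Type*} [Fintype n] (c : ℝ) (v w x : n → ℝ) :
    c * (dotProduct v x * dotProduct w x)
      = ∑ i, ∑ j, v i * w j * (c * (x i * x j)) := by
  rw [dotProduct, dotProduct, Finset.sum_mul_sum, Finset.mul_sum]
  exact Finset.sum_congr rfl fun i _ => by
    rw [Finset.mul_sum]
    exact Finset.sum_congr rfl fun j _ => by ring

lemma integral_expand {n : Type*} [Fintype n] {ρ : Measure (n → ℝ)}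
    (c : (n → ℝ) → ℝ) (hc : ∀ i j, Integrable (fun x => c x * (x i * x j)) ρ)
    (v w : n → ℝ) :
    ∫ x, c x * (dotProduct v x * dotProduct w x) ∂ρ
      = ∑ i, ∑ j, v i * w j * ∫ x, c x * (x i * x j) ∂ρ := by
  have h1 : ∀ x : n → ℝ, c x * (dotProduct v x * dotProduct w x)
      = ∑ i, ∑ j, v i * w j * (c x * (x i * x j)) := by
    intro x
    rw [dotProduct, dotProduct, Finset.sum_mul_sum, Finset.mul_sum]
    exact Finset.sum_congr rfl fun i _ => by
      rw [Finset.mul_sum]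
      exact Finset.sum_congr rfl fun j _ => by ring
  calc ∫ x, c x * (dotProduct v x * dotProduct w x) ∂ρ
      = ∫ x, ∑ i, ∑ j, v i * w j * (c x * (x i * x j)) ∂ρ := by simp_rw [h1]
    _ = ∑ i, ∫ x, ∑ j, v i * w j * (c x * (x i * x j)) ∂ρ :=
        integral_finset_sum _ fun i _ =>
          integrable_finset_sum _ fun j _ => (hc i j).const_mul _
    _ = ∑ i, ∑ j, v i * w j * ∫ x, c x * (x i * x j) ∂ρ := by
        refine Finset.sum_congr rfl fun i _ => ?_
        rw [integral_finset_sum _ fun j _ => (hc i j).const_mul _]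
        exact Finset.sum_congr rfl fun j _ => integral_const_mul _ _

theorem stmt_3 {n : Type*} [Fintype n] [DecidableEq n]
    (ρ : Measure (n → ℝ)) [IsProbabilityMeasure ρ]
    (C : Matrix n n ℝ) (hC : C.PosSemidef)
    (h2 : ∀ i j : n, Integrable (fun x : n → ℝ => x i * x j) ρ)
    (h4 : ∀ i j : n, Integrable (fun x : n → ℝ => (dotProduct x (C.mulVec x)) * (x i * x j)) ρ) :
    ((Matrix.of fun i j : n => ∫ x, (dotProduct x (C.mulVec x)) * (x i * x j) ∂ρ)
      - (Matrix.of fun i j : n => ∫ x, x i * x j ∂ρ) * C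
        * (Matrix.of fun i j : n => ∫ x, x i * x j ∂ρ)).PosSemidef := by
  classical
  obtain ⟨B, hB⟩ : ∃ B : Matrix n n ℝ, C = B.conjTranspose * B := by
    open scoped MatrixOrder in obtain ⟨B, hB⟩ := CStarAlgebra.nonneg_iff_eq_star_mul_self.mp hC.nonneg
    exact ⟨B, hB⟩
  set q : (n → ℝ) → ℝ := fun x => dotProduct x (C.mulVec x) with hq
  set Hm : Matrix n n ℝ := Matrix.of fun i j : n => ∫ x, x i * x j ∂ρ with hHm
  set A : Matrix n n ℝ := Matrix.of fun i j : n => ∫ x, q x * (x i * x j) ∂ρ with hA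
  have h4' : ∀ i j, Integrable (fun x : n → ℝ => q x * (x i * x j)) ρ := h4
  -- q as sum of squares
  have hqs : ∀ x : n → ℝ, q x = ∑ k, (B.mulVec x k) ^ 2 := by
    intro x
    show dotProduct x (C.mulVec x) = _
    rw [hB, ← Matrix.mulVec_mulVec, Matrix.dotProduct_mulVec, Matrix.vecMul_conjTranspose]
    simp [dotProduct, sq]
  -- symmetry facts
  have hHsymm : Hm.transpose = Hm := by
    ext i j
    simp only [Matrix.transpose_apply, hHm, Matrix.of_apply]
    simp_rw [mul_comm]
  have hAherm : A.IsHermitian := by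
    ext i j
    simp only [hA, Matrix.conjTranspose_apply, Matrix.of_apply, star_trivial]
    congr 1
    funext x
    ring
  have hHherm : Hm.IsHermitian := by
    ext i j
    simp only [hHm, Matrix.conjTranspose_apply, Matrix.of_apply, star_trivial]
    simp_rw [mul_comm]
  have hHCHherm : (Hm * C * Hm).IsHermitian := by
    show (Hm * C * Hm).conjTranspose = _
    rw [Matrix.conjTranspose_mul, Matrix.conjTranspose_mul, hHherm.eq, hC.1.eq, mul_assoc]
  show (A - Hm * C * Hm).PosSemidef
  refine Matrix.PosSemidef.of_dotProduct_mulVec_nonneg ?_ ?_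
  · exact hAherm.sub hHCHherm
  · intro v
    rw [star_trivial, Matrix.sub_mulVec, dotProduct_sub, sub_nonneg]
    set w : n → ℝ := Hm.mulVec v with hw
    set g : n → (n → ℝ) → ℝ := fun k x => B.mulVec x k * dotProduct v x with hg
    have hgexp : ∀ k, g k = fun x => ∑ i, ∑ j, B k i * v j * (x i * x j) := by
      intro k
      funext x
      show B.mulVec x k * dotProduct v x = _
      rw [Matrix.mulVec, dotProduct, dotProduct, Finset.sum_mul_sum]
      exact Finset.sum_congr rfl fun i _ => Finset.sum_congr rfl fun j _ => by ring
    have hgint : ∀ k, Integrable (g k) ρ := by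
      intro k
      rw [hgexp k]
      exact integrable_finset_sum _ fun i _ =>
        integrable_finset_sum _ fun j _ => (h2 i j).const_mul _
    have hFeq : ∀ x : n → ℝ, q x * (dotProduct v x * dotProduct v x)
        = ∑ k, g k x ^ 2 := by
      intro x
      rw [hqs x, Finset.sum_mul]
      exact Finset.sum_congr rfl fun k _ => by simp only [hg]; ring
    have hFint : Integrable (fun x => q x * (dotProduct v x * dotProduct v x)) ρ := by
      have heq : (fun x : n → ℝ => q x * (dotProduct v x * dotProduct v x))
          = fun x => ∑ i, ∑ j, v i * v j * (q x * (x i * x j)) :=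
        funext fun x => dot_mul_dot_expand (q x) v v x
      rw [heq]
      exact integrable_finset_sum _ fun i _ =>
        integrable_finset_sum _ fun j _ => (h4' i j).const_mul _
    have hg2int : ∀ k, Integrable (fun x => g k x ^ 2) ρ := by
      intro k
      have hm : AEStronglyMeasurable (fun x => g k x ^ 2) ρ := by
        simpa [sq] using ((hgint k).aestronglyMeasurable.fun_mul (hgint k).aestronglyMeasurable)
      refine hFint.mono' hm (ae_of_all _ fun x => ?_)
      rw [Real.norm_eq_abs, abs_of_nonneg (sq_nonneg _), hFeq x]
      exact Finset.single_le_sum (fun k' _ => sq_nonneg (g k' x)) (Finset.mem_univ k)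
    -- RHS of the inequality
    have key1 : dotProduct v (A.mulVec v)
        = ∫ x, q x * (dotProduct v x * dotProduct v x) ∂ρ := by
      rw [integral_expand q h4' v v]
      simp only [hA, dotProduct, Matrix.mulVec, Matrix.of_apply, Finset.mul_sum]
      exact Finset.sum_congr rfl fun i _ => Finset.sum_congr rfl fun j _ => by ring
    -- LHS of the inequality
    have hLHS : dotProduct v ((Hm * C * Hm).mulVec v)
        = dotProduct w (C.mulVec w) := by
      rw [← Matrix.mulVec_mulVec, ← Matrix.mulVec_mulVec, Matrix.dotProduct_mulVec]
      have : Matrix.vecMul v Hm = w := by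
        nth_rewrite 1 [← hHsymm]
        rw [Matrix.vecMul_transpose, hw]
      rw [this]
    have hBw : ∀ k, B.mulVec w k = ∫ x, g k x ∂ρ := by
      intro k
      have : ∫ x, g k x ∂ρ = ∑ i, ∑ j, B k i * v j * ∫ x, x i * x j ∂ρ := by
        rw [hgexp k]
        rw [integral_finset_sum _ (fun i _ =>
          integrable_finset_sum _ fun j _ => (h2 i j).const_mul _)]
        refine Finset.sum_congr rfl fun i _ => ?_
        rw [integral_finset_sum _ fun j _ => (h2 i j).const_mul _]
        exact Finset.sum_congr rfl fun j _ => integral_const_mul _ _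
      rw [this]
      simp only [hw, hHm, Matrix.mulVec, dotProduct, Matrix.of_apply, Finset.mul_sum]
      exact Finset.sum_congr rfl fun i _ => Finset.sum_congr rfl fun j _ => by ring
    calc dotProduct v ((Hm * C * Hm).mulVec v)
        = ∑ k, (B.mulVec w k) ^ 2 := by
          rw [hLHS]
          exact hqs w
      _ = ∑ k, (∫ x, g k x ∂ρ) ^ 2 := by simp_rw [hBw]
      _ ≤ ∑ k, ∫ x, g k x ^ 2 ∂ρ := Finset.sum_le_sum fun k _ =>
          sq_integral_le_integral_sq (hgint k).aestronglyMeasurable (hg2int k)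
      _ = ∫ x, ∑ k, g k x ^ 2 ∂ρ := (integral_finset_sum _ fun k _ => hg2int k).symm
      _ = ∫ x, q x * (dotProduct v x * dotProduct v x) ∂ρ := by
          congr 1
          funext x
          rw [hFeq x]
      _ = dotProduct v (A.mulVec v) := key1.symm
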